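/- Let f : ℝ^N → ℝ^{N'} be an ℝ-linear map and Σ a generalized fan in ℝ^N with support X. Put Σ_× := {σ ∈ Σ : f⁻¹(f(σ)) ∩ X = σ}. Then: (1) Σ' := {f(σ) : σ ∈ Σ_×} is a generalized fan in ℝ^{N'}; (2) the maps σ ↦ f(σ) and σ' ↦ f⁻¹(σ') ∩ X are mutually inverse bijections between Σ_× and Σ'; (3) if every maximal element of Σ belongs to Σ_×, then the support of Σ' is f(X). -/

import Mathlib

open Set

noncomputable section

/-! ## Polyhedral cones and generalized fans -/

/-- A *polyhedral cone* in a real vector space: a subset of the form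
`Σ_{j=1}^k ℝ_{≥0} v_j` for finitely many vectors `v_1, …, v_k`. -/
def IsPolyhedralCone {V : Type*} [AddCommGroup V] [Module ℝ V] (C : Set V) : Prop :=
  ∃ (k : ℕ) (v : Fin k → V),
    C = {x | ∃ c : Fin k → ℝ, (∀ j, 0 ≤ c j) ∧ x = ∑ j, c j • v j}

/-- `F` is a *face* of the cone `C`: a nonempty convex subset of `C`, stable under
multiplication by nonnegative scalars, such that whenever `v, w ∈ C` and `v + w ∈ F`
one has `v, w ∈ F`. -/
def IsFaceOf {V : Type*} [AddCommGroup V] [Module ℝ V] (F C : Set V) : Prop :=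
  F ⊆ C ∧ F.Nonempty ∧ Convex ℝ F ∧
    (∀ r : ℝ, 0 ≤ r → ∀ x ∈ F, r • x ∈ F) ∧
    ∀ v ∈ C, ∀ w ∈ C, v + w ∈ F → v ∈ F ∧ w ∈ F

/-- A *generalized fan*: a set of polyhedral cones containing all faces of its members,
in which the intersection of any two members is a face of each of them. -/
def IsGeneralizedFan {V : Type*} [AddCommGroup V] [Module ℝ V] (𝒮 : Set (Set V)) : Prop :=
  (∀ σ ∈ 𝒮, IsPolyhedralCone σ) ∧
    (∀ σ ∈ 𝒮, ∀ τ : Set V, IsFaceOf τ σ → τ ∈ 𝒮) ∧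
    ∀ σ₁ ∈ 𝒮, ∀ σ₂ ∈ 𝒮, IsFaceOf (σ₁ ∩ σ₂) σ₁ ∧ IsFaceOf (σ₁ ∩ σ₂) σ₂

/-- The maximal members of a family of sets with respect to inclusion. -/
def maxMembers {α : Type*} (𝒮 : Set (Set α)) : Set (Set α) :=
  {σ ∈ 𝒮 | ∀ τ ∈ 𝒮, σ ⊆ τ → σ = τ}

/-- The dimension of a subset of a real vector space: the dimension of its linear span. -/
def setDim {V : Type*} [AddCommGroup V] [Module ℝ V] (F : Set V) : ℕ :=
  Module.finrank ℝ ↥(Submodule.span ℝ F)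

section Helpers

variable {V W : Type*} [AddCommGroup V] [Module ℝ V] [AddCommGroup W] [Module ℝ W]

lemma IsPolyhedralCone.image (f : V →ₗ[ℝ] W) {C : Set V} (h : IsPolyhedralCone C) :
    IsPolyhedralCone (⇑f '' C) := by
  obtain ⟨k, v, rfl⟩ := h
  refine ⟨k, fun j => f (v j), ?_⟩
  ext y
  constructor
  · rintro ⟨x, ⟨c, hc, rfl⟩, rfl⟩
    exact ⟨c, hc, by simp [map_sum, map_smul]⟩
  · rintro ⟨c, hc, rfl⟩
    exact ⟨∑ j, c j • v j, ⟨c, hc, rfl⟩, by simp [map_sum, map_smul]⟩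

lemma IsPolyhedralCone.add_mem' {C : Set V} (h : IsPolyhedralCone C) {x y : V}
    (hx : x ∈ C) (hy : y ∈ C) : x + y ∈ C := by
  obtain ⟨k, v, rfl⟩ := h
  obtain ⟨c, hc, rfl⟩ := hx
  obtain ⟨d, hd, rfl⟩ := hy
  exact ⟨c + d, fun j => add_nonneg (hc j) (hd j),
    by simp [add_smul, Finset.sum_add_distrib]⟩

lemma IsPolyhedralCone.smul_mem' {C : Set V} (h : IsPolyhedralCone C) {r : ℝ}
    (hr : 0 ≤ r) {x : V} (hx : x ∈ C) : r • x ∈ C := by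
  obtain ⟨k, v, rfl⟩ := h
  obtain ⟨c, hc, rfl⟩ := hx
  exact ⟨fun j => r * c j, fun j => mul_nonneg hr (hc j),
    by simp [Finset.smul_sum, smul_smul]⟩

lemma IsPolyhedralCone.convex' {C : Set V} (h : IsPolyhedralCone C) : Convex ℝ C := by
  intro x hx y hy a b ha hb hab
  exact h.add_mem' (h.smul_mem' ha hx) (h.smul_mem' hb hy)

lemma subset_of_face_of_span_le {F C : Set V}
    (hF : IsFaceOf F C) (hspan : Submodule.span ℝ C ≤ Submodule.span ℝ F) : C ⊆ F := by
  obtain ⟨hFC, hne, hconv, hsmul, hface⟩ := hF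
  have h0 : (0 : V) ∈ F := by
    obtain ⟨x, hx⟩ := hne
    simpa using hsmul 0 le_rfl x hx
  have hadd : ∀ x ∈ F, ∀ y ∈ F, x + y ∈ F := by
    intro x hx y hy
    have h1 := hconv hx hy (by norm_num : (0:ℝ) ≤ 1/2) (by norm_num : (0:ℝ) ≤ 1/2)
      (by norm_num)
    have h2 := hsmul 2 (by norm_num) _ h1
    have : (2:ℝ) • ((1/2 : ℝ) • x + (1/2 : ℝ) • y) = x + y := by
      rw [smul_add, smul_smul, smul_smul]; norm_num
    rwa [this] at h2
  set p : Submodule ℝ V :=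
    { carrier := {y | ∃ u ∈ F, ∃ w ∈ F, y = u - w}
      add_mem' := by
        rintro a b ⟨u, hu, w, hw, rfl⟩ ⟨u', hu', w', hw', rfl⟩
        exact ⟨u + u', hadd u hu u' hu', w + w', hadd w hw w' hw', by abel⟩
      zero_mem' := ⟨0, h0, 0, h0, by simp⟩
      smul_mem' := by
        rintro r a ⟨u, hu, w, hw, rfl⟩
        rcases le_or_gt 0 r with hr | hr
        · exact ⟨r • u, hsmul r hr u hu, r • w, hsmul r hr w hw, by rw [smul_sub]⟩
        · refine ⟨(-r) • w, hsmul (-r) (by linarith) w hw,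
            (-r) • u, hsmul (-r) (by linarith) u hu, ?_⟩
          rw [smul_sub, neg_smul, neg_smul]; abel } with hp
  intro x hx
  have hxp : x ∈ p := by
    have : x ∈ Submodule.span ℝ F := hspan (Submodule.subset_span hx)
    have hFp : Submodule.span ℝ F ≤ p :=
      Submodule.span_le.mpr (fun y hy => ⟨y, hy, 0, h0, by simp⟩)
    exact hFp this
  obtain ⟨u, hu, w, hw, hxw⟩ := hxp
  have hxwF : x + w ∈ F := by
    have : x + w = u := by rw [hxw]; abel
    rwa [this]
  exact (hface x hx w (hFC hw) hxwF).1

end Helpers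

/-- **Lemma (fans induced by a linear map).** Let `f : ℝ^N → ℝ^{N'}` be an `ℝ`-linear
map and `S` a generalized fan in `ℝ^N` with support `X`. Put
`Scross = {σ ∈ S : f⁻¹(f(σ)) ∩ X = σ}`. Then:
(1) `S' = {f(σ) : σ ∈ Scross}` is a generalized fan in `ℝ^{N'}`;
(2) the maps `σ ↦ f(σ)` and `σ' ↦ f⁻¹(σ') ∩ X` are mutually inverse bijections between
`Scross` and `S'`;
(3) if every maximal element of `S` belongs to `Scross`, then the support of `S'` is
`f(X)`. -/
theorem fan_image_of_linearMap {N N' : ℕ} (f : (Fin N → ℝ) →ₗ[ℝ] (Fin N' → ℝ))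
    (S : Set (Set (Fin N → ℝ))) (hS : IsGeneralizedFan S)
    (X : Set (Fin N → ℝ)) (hX : X = ⋃₀ S)
    (Scross : Set (Set (Fin N → ℝ)))
    (hScross : Scross = {σ ∈ S | ⇑f ⁻¹' (⇑f '' σ) ∩ X = σ})
    (S' : Set (Set (Fin N' → ℝ)))
    (hS' : S' = (fun σ => ⇑f '' σ) '' Scross) :
    IsGeneralizedFan S' ∧
      (Set.BijOn (fun σ => ⇑f '' σ) Scross S' ∧
        (∀ σ ∈ Scross, ⇑f ⁻¹' (⇑f '' σ) ∩ X = σ) ∧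
        ∀ σ' ∈ S', ⇑f ⁻¹' σ' ∩ X ∈ Scross ∧ ⇑f '' (⇑f ⁻¹' σ' ∩ X) = σ') ∧
      (maxMembers S ⊆ Scross → ⋃₀ S' = ⇑f '' X) := by
  obtain ⟨hSpoly, hSface, hSinter⟩ := hS
  have hmemX : ∀ σ ∈ S, σ ⊆ X := fun σ hσ => hX ▸ subset_sUnion_of_mem hσ
  have hcross : ∀ σ, σ ∈ Scross ↔ σ ∈ S ∧ ⇑f ⁻¹' (⇑f '' σ) ∩ X = σ := by
    intro σ; rw [hScross]; exact mem_sep_iff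
  have hS'mem : ∀ σ', σ' ∈ S' ↔ ∃ σ ∈ Scross, ⇑f '' σ = σ' := by
    intro σ'; rw [hS']; exact mem_image _ _ _
  -- Claim A: preimage of a face of f '' σ (σ ∈ Scross) is a face in Scross mapping onto it
  have claimA : ∀ σ ∈ Scross, ∀ τ' : Set (Fin N' → ℝ), IsFaceOf τ' (⇑f '' σ) →
      (⇑f ⁻¹' τ' ∩ σ) ∈ Scross ∧ ⇑f '' (⇑f ⁻¹' τ' ∩ σ) = τ' := by
    intro σ hσ τ' hτ'
    obtain ⟨hσS, hσsat⟩ := (hcross σ).mp hσ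
    obtain ⟨hτ'sub, hτ'ne, hτ'conv, hτ'sm, hτ'face⟩ := hτ'
    set τ := ⇑f ⁻¹' τ' ∩ σ with hτdef
    have hτface : IsFaceOf τ σ := by
      refine ⟨inter_subset_right, ?_, ?_, ?_, ?_⟩
      · obtain ⟨y, hy⟩ := hτ'ne
        obtain ⟨x, hxσ, rfl⟩ := hτ'sub hy
        exact ⟨x, hy, hxσ⟩
      · exact Convex.inter (hτ'conv.linear_preimage f) ((hSpoly σ hσS).convex')
      · intro r hr x hx
        exact ⟨by simpa [map_smul] using hτ'sm r hr _ hx.1,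
          (hSpoly σ hσS).smul_mem' hr hx.2⟩
      · intro v hv w hw hvw
        have h1 : f v ∈ τ' ∧ f w ∈ τ' := by
          refine hτ'face (f v) (mem_image_of_mem _ hv) (f w) (mem_image_of_mem _ hw) ?_
          simpa [map_add] using hvw.1
        exact ⟨⟨h1.1, hv⟩, ⟨h1.2, hw⟩⟩
    have hτS : τ ∈ S := hSface σ hσS τ hτface
    have himg : ⇑f '' τ = τ' := by
      apply Subset.antisymm
      · rintro _ ⟨x, hx, rfl⟩; exact hx.1
      · intro y hy
        obtain ⟨x, hxσ, rfl⟩ := hτ'sub hy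
        exact ⟨x, ⟨hy, hxσ⟩, rfl⟩
    refine ⟨(hcross τ).mpr ⟨hτS, ?_⟩, himg⟩
    rw [himg]
    apply Subset.antisymm
    · rintro x ⟨hx1, hx2⟩
      have hxσ : x ∈ σ := by
        rw [← hσsat]; exact ⟨hτ'sub hx1, hx2⟩
      exact ⟨hx1, hxσ⟩
    · intro x hx
      exact ⟨hx.1, hmemX σ hσS hx.2⟩
  -- Claim C: image of a saturated face is a face of the image
  have claimC : ∀ F σ : Set (Fin N → ℝ), σ ∈ S → F ∈ Scross → IsFaceOf F σ →
      IsFaceOf (⇑f '' F) (⇑f '' σ) := by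
    intro F σ hσS hFX hFσ
    obtain ⟨hFS, hFsat⟩ := (hcross F).mp hFX
    obtain ⟨hFσsub, hne, hconv, hsm, hfa⟩ := hFσ
    refine ⟨image_mono hFσsub, hne.image f, hconv.linear_image f, ?_, ?_⟩
    · rintro r hr _ ⟨x, hx, rfl⟩
      exact ⟨r • x, hsm r hr x hx, by simp [map_smul]⟩
    · rintro _ ⟨v, hv, rfl⟩ _ ⟨w, hw, rfl⟩ hvw
      have hvwσ : v + w ∈ σ := (hSpoly σ hσS).add_mem' hv hw
      have hvwF : v + w ∈ F := by
        rw [← hFsat]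
        exact ⟨by simpa [map_add] using hvw, hmemX σ hσS hvwσ⟩
      obtain ⟨h1, h2⟩ := hfa v hv w hw hvwF
      exact ⟨mem_image_of_mem _ h1, mem_image_of_mem _ h2⟩
  -- intersections
  have interCross : ∀ σ₁ ∈ Scross, ∀ σ₂ ∈ Scross, (σ₁ ∩ σ₂) ∈ Scross := by
    intro σ₁ h₁ σ₂ h₂
    obtain ⟨h₁S, h₁sat⟩ := (hcross σ₁).mp h₁
    obtain ⟨h₂S, h₂sat⟩ := (hcross σ₂).mp h₂
    refine (hcross _).mpr ⟨hSface σ₁ h₁S _ (hSinter σ₁ h₁S σ₂ h₂S).1, ?_⟩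
    apply Subset.antisymm
    · rintro x ⟨hx1, hx2⟩
      obtain ⟨z, hz, hfz⟩ := hx1
      constructor
      · rw [← h₁sat]; exact ⟨⟨z, hz.1, hfz⟩, hx2⟩
      · rw [← h₂sat]; exact ⟨⟨z, hz.2, hfz⟩, hx2⟩
    · intro x hx
      exact ⟨mem_image_of_mem _ hx, hmemX σ₁ h₁S hx.1⟩
  have imageInter : ∀ σ₁ ∈ Scross, ∀ σ₂ ∈ Scross,
      ⇑f '' (σ₁ ∩ σ₂) = (⇑f '' σ₁) ∩ (⇑f '' σ₂) := by
    intro σ₁ h₁ σ₂ h₂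
    obtain ⟨h₁S, h₁sat⟩ := (hcross σ₁).mp h₁
    obtain ⟨h₂S, h₂sat⟩ := (hcross σ₂).mp h₂
    apply Subset.antisymm (image_inter_subset _ _ _)
    rintro y ⟨⟨x₁, hx₁, rfl⟩, hy₂⟩
    have hx₁₂ : x₁ ∈ σ₂ := by
      rw [← h₂sat]
      exact ⟨hy₂, hmemX σ₁ h₁S hx₁⟩
    exact ⟨x₁, ⟨hx₁, hx₁₂⟩, rfl⟩
  -- Part (1)
  have part1 : IsGeneralizedFan S' := by
    refine ⟨?_, ?_, ?_⟩
    · intro σ' hσ'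
      obtain ⟨σ, hσ, rfl⟩ := (hS'mem σ').mp hσ'
      exact (hSpoly σ ((hcross σ).mp hσ).1).image f
    · intro σ' hσ' τ' hτ'
      obtain ⟨σ, hσ, rfl⟩ := (hS'mem σ').mp hσ'
      obtain ⟨hmem, himg⟩ := claimA σ hσ τ' hτ'
      exact (hS'mem τ').mpr ⟨_, hmem, himg⟩
    · intro σ₁' h₁' σ₂' h₂'
      obtain ⟨σ₁, h₁, rfl⟩ := (hS'mem σ₁').mp h₁'
      obtain ⟨σ₂, h₂, rfl⟩ := (hS'mem σ₂').mp h₂'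
      have hI := imageInter σ₁ h₁ σ₂ h₂
      have hIc := interCross σ₁ h₁ σ₂ h₂
      constructor
      · rw [← hI]
        exact claimC _ _ ((hcross σ₁).mp h₁).1 hIc (hSinter _ ((hcross σ₁).mp h₁).1 _ ((hcross σ₂).mp h₂).1).1
      · rw [← hI]
        exact claimC _ _ ((hcross σ₂).mp h₂).1 hIc (hSinter _ ((hcross σ₁).mp h₁).1 _ ((hcross σ₂).mp h₂).1).2
  -- Part (2)
  have part2a : Set.BijOn (fun σ => ⇑f '' σ) Scross S' := by
    refine ⟨fun σ hσ => (hS'mem _).mpr ⟨σ, hσ, rfl⟩, ?_, fun σ' hσ' => (hS'mem σ').mp hσ'⟩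
    intro σ₁ h₁ σ₂ h₂ heq
    have h₁sat := ((hcross σ₁).mp h₁).2
    have h₂sat := ((hcross σ₂).mp h₂).2
    rw [← h₁sat, ← h₂sat]
    simp only at heq
    rw [heq]
  have part2b : ∀ σ ∈ Scross, ⇑f ⁻¹' (⇑f '' σ) ∩ X = σ := fun σ hσ => ((hcross σ).mp hσ).2
  have part2c : ∀ σ' ∈ S', ⇑f ⁻¹' σ' ∩ X ∈ Scross ∧ ⇑f '' (⇑f ⁻¹' σ' ∩ X) = σ' := by
    intro σ' hσ'
    obtain ⟨σ, hσ, rfl⟩ := (hS'mem σ').mp hσ'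
    have hsat := ((hcross σ).mp hσ).2
    rw [hsat]
    exact ⟨hσ, rfl⟩
  -- Part (3)
  have part3 : maxMembers S ⊆ Scross → ⋃₀ S' = ⇑f '' X := by
    intro hmax
    apply Subset.antisymm
    · rintro y ⟨σ', hσ', hy⟩
      obtain ⟨σ, hσ, rfl⟩ := (hS'mem σ').mp hσ'
      obtain ⟨x, hx, rfl⟩ := hy
      exact ⟨x, hmemX σ ((hcross σ).mp hσ).1 hx, rfl⟩
    · rintro _ ⟨x, hx, rfl⟩
      obtain ⟨σ₀, hσ₀S, hxσ₀⟩ := hX ▸ hx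
      -- find a member of S containing σ₀ of maximal dimension
      set D : Set ℕ := setDim '' {τ | τ ∈ S ∧ σ₀ ⊆ τ} with hD
      have hDne : D.Nonempty := ⟨setDim σ₀, σ₀, ⟨hσ₀S, Subset.rfl⟩, rfl⟩
      have hDfin : D.Finite := by
        apply Set.Finite.subset (Set.finite_Iic N)
        rintro _ ⟨τ, _, rfl⟩
        have : Module.finrank ℝ ↥(Submodule.span ℝ τ) ≤
            Module.finrank ℝ (Fin N → ℝ) := Submodule.finrank_le _
        simpa [setDim, Module.finrank_fin_fun] using this
      obtain ⟨d, hdD, hdmax⟩ : ∃ d ∈ D, ∀ d' ∈ D, id d ≤ id d' → id d = id d' := by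
        obtain ⟨d, hd⟩ := hDfin.exists_maximal hDne
        exact ⟨d, hd.1, fun d' hd' h => le_antisymm h (hd.2 hd' h)⟩
      have hdtop : ∀ d' ∈ D, d' ≤ d := by
        intro d' hd'
        by_contra hlt
        push_neg at hlt
        have heq := hdmax d' hd' hlt.le
        simp only [id] at heq
        omega
      obtain ⟨τ, ⟨hτS, hστ⟩, hτd⟩ := hdD
      have hτmax : τ ∈ maxMembers S := by
        refine ⟨hτS, fun ρ hρ hτρ => ?_⟩
        have hστρ : σ₀ ⊆ ρ := hστ.trans hτρ
        have hdρ : setDim ρ ≤ setDim τ := by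
          rw [hτd]
          exact hdtop _ ⟨ρ, ⟨hρ, hστρ⟩, rfl⟩
        have hle : Submodule.span ℝ τ ≤ Submodule.span ℝ ρ := Submodule.span_mono hτρ
        have hspaneq : Submodule.span ℝ τ = Submodule.span ℝ ρ :=
          Submodule.eq_of_le_of_finrank_le hle hdρ
        have hfaceτρ : IsFaceOf τ ρ := by
          have := (hSinter τ hτS ρ hρ).2
          rwa [inter_eq_self_of_subset_left hτρ] at this
        exact Subset.antisymm hτρ (subset_of_face_of_span_le hfaceτρ (le_of_eq hspaneq.symm))
      have hτcross : τ ∈ Scross := hmax hτmax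
      exact ⟨⇑f '' τ, (hS'mem _).mpr ⟨τ, hτcross, rfl⟩, mem_image_of_mem _ (hστ hxσ₀)⟩
  exact ⟨part1, ⟨part2a, part2b, part2c⟩, part3⟩
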